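/- For μ ∈ {−1/2, 0, 1/2} and ρ : (0,∞) → ℝ continuous with sup_{x ≥ x₀} x|ρ(x)| < ∞, define S_μρ(x) := −∫₁^∞ r^{−μ} ρ(xr) dr/r. Then (D_x − μ) S_μρ = ρ on (x₀, ∞), where D_x = x d/dx, and sup_{x ≥ x₀} x|S_μρ(x)| ≤ (1/(1+μ)) sup_{x ≥ x₀} x|ρ(x)|. -/

import Mathlib

open MeasureTheory

/-- The decaying right inverse of `D_x - μ`:
`S_μρ(x) = -∫₁^∞ r^{-μ} ρ(x r) dr/r`. -/
noncomputable def Smu (μ : ℝ) (ρ : ℝ → ℝ) : ℝ → ℝ :=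
  fun x => -∫ r in Set.Ioi (1 : ℝ), r ^ (-μ) * ρ (x * r) / r

theorem Smu_properties (μ : ℝ) (hμ : μ = -(1/2) ∨ μ = 0 ∨ μ = 1/2)
    (ρ : ℝ → ℝ) (hcont : ContinuousOn ρ (Set.Ioi 0))
    (x₀ M : ℝ) (hx₀ : 0 < x₀) (hM : ∀ x : ℝ, x₀ ≤ x → x * |ρ x| ≤ M) :
    (∀ x : ℝ, x₀ < x → HasDerivAt (Smu μ ρ) ((ρ x + μ * Smu μ ρ x) / x) x) ∧
    (∀ x : ℝ, x₀ ≤ x → x * |Smu μ ρ x| ≤ (1 / (1 + μ)) * M) := by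
  have hμ1 : (-1 : ℝ) < μ := by rcases hμ with rfl | rfl | rfl <;> norm_num
  have hμ2 : (0 : ℝ) < 1 + μ := by linarith
  have hM0 : 0 ≤ M := le_trans (mul_nonneg hx₀.le (abs_nonneg _)) (hM x₀ le_rfl)
  set g : ℝ → ℝ := fun s => s ^ (-μ - 1) * ρ s with hg
  -- continuity of g on Ioi 0
  have hgcont : ContinuousOn g (Set.Ioi (0 : ℝ)) := by
    apply ContinuousOn.mul _ hcont
    exact fun s hs => ((Real.continuousAt_rpow_const s (-μ - 1)
      (Or.inl (ne_of_gt hs))).continuousWithinAt)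
  -- pointwise bound of g
  have hgbound : ∀ s : ℝ, x₀ ≤ s → |g s| ≤ M * s ^ (-μ - 2) := by
    intro s hs
    have hs0 : 0 < s := lt_of_lt_of_le hx₀ hs
    have h1 : s ^ (-μ - 1) = s ^ (-μ - 2) * s := by
      rw [← Real.rpow_add_one hs0.ne']; ring_nf
    rw [hg, abs_mul, abs_of_nonneg (Real.rpow_nonneg hs0.le _), h1]
    calc s ^ (-μ - 2) * s * |ρ s| = s ^ (-μ - 2) * (s * |ρ s|) := by ring
      _ ≤ s ^ (-μ - 2) * M := by
          exact mul_le_mul_of_nonneg_left (hM s hs) (Real.rpow_nonneg hs0.le _)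
      _ = M * s ^ (-μ - 2) := by ring
  -- integrability of g on Ioi x for x ≥ x₀
  have hgint : ∀ x : ℝ, x₀ ≤ x → IntegrableOn g (Set.Ioi x) := by
    intro x hx
    have hx0 : 0 < x := lt_of_lt_of_le hx₀ hx
    have hmaj : IntegrableOn (fun s : ℝ => M * s ^ (-μ - 2)) (Set.Ioi x) :=
      (integrableOn_Ioi_rpow_of_lt (by linarith) hx0).const_mul M
    refine Integrable.mono' hmaj ?_ ?_
    · exact (hgcont.mono (fun s hs => lt_trans hx0 hs)).aestronglyMeasurable measurableSet_Ioi
    · filter_upwards [ae_restrict_mem measurableSet_Ioi] with s hs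
      exact (Real.norm_eq_abs _ ▸ hgbound s (le_of_lt (lt_of_le_of_lt hx hs)))
  -- representation: Smu μ ρ x = -(x ^ μ * ∫ s in Ioi x, g s)
  have hrep : ∀ x : ℝ, 0 < x → Smu μ ρ x = -(x ^ μ * ∫ s in Set.Ioi x, g s) := by
    intro x hx0
    have key : ∀ r : ℝ, r ∈ Set.Ioi (1:ℝ) →
        r ^ (-μ) * ρ (x * r) / r = x ^ (μ + 1) * g (x * r) := by
      intro r hr
      have hr0 : 0 < r := lt_trans one_pos hr
      have hxr : 0 < x * r := mul_pos hx0 hr0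
      simp only [hg]
      have h1 : (x * r) ^ (-μ - 1) = x ^ (-μ - 1) * r ^ (-μ - 1) :=
        Real.mul_rpow hx0.le hr0.le
      have h2 : x ^ (μ + 1) * x ^ (-μ - 1) = 1 := by
        rw [← Real.rpow_add hx0]; norm_num
      have h3 : r ^ (-μ - 1) = r ^ (-μ) * r⁻¹ := by
        rw [← Real.rpow_neg_one r, ← Real.rpow_add hr0]; ring_nf
      rw [h1, h3, div_eq_mul_inv]
      linear_combination (-(r ^ (-μ) * r⁻¹ * ρ (x * r))) * h2
    have := setIntegral_congr_fun (μ := volume) (measurableSet_Ioi (a := (1:ℝ))) key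
    rw [Smu, this]
    rw [integral_const_mul]
    rw [integral_comp_mul_left_Ioi g 1 hx0]
    rw [mul_one, smul_eq_mul, ← mul_assoc]
    congr 2
    rw [← Real.rpow_neg_one x, ← Real.rpow_add hx0]
    ring_nf
  -- the bound on the integral
  have hFbound : ∀ x : ℝ, x₀ ≤ x → |∫ s in Set.Ioi x, g s| ≤ M * (x ^ (-μ - 1) / (1 + μ)) := by
    intro x hx
    have hx0 : 0 < x := lt_of_lt_of_le hx₀ hx
    have hmaj : IntegrableOn (fun s : ℝ => M * s ^ (-μ - 2)) (Set.Ioi x) :=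
      (integrableOn_Ioi_rpow_of_lt (by linarith) hx0).const_mul M
    have h1 : |∫ s in Set.Ioi x, g s| ≤ ∫ s in Set.Ioi x, M * s ^ (-μ - 2) := by
      rw [← Real.norm_eq_abs]
      refine norm_integral_le_of_norm_le hmaj ?_
      filter_upwards [ae_restrict_mem measurableSet_Ioi] with s hs
      exact (Real.norm_eq_abs _ ▸ hgbound s (le_of_lt (lt_of_le_of_lt hx hs)))
    calc |∫ s in Set.Ioi x, g s| ≤ ∫ s in Set.Ioi x, M * s ^ (-μ - 2) := h1
      _ = M * ∫ s in Set.Ioi x, s ^ (-μ - 2) := integral_const_mul M _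
      _ = M * (-x ^ (-μ - 2 + 1) / (-μ - 2 + 1)) := by
          rw [integral_Ioi_rpow_of_lt (by linarith) hx0]
      _ = M * (x ^ (-μ - 1) / (1 + μ)) := by
          rw [show -μ - 2 + 1 = -μ - 1 by ring]
          field_simp [show (-μ - 1 : ℝ) ≠ 0 by linarith, show (1 + μ : ℝ) ≠ 0 by linarith]
          ring
  constructor
  · -- derivative
    intro x hx
    have hx0 : 0 < x := lt_trans hx₀ hx
    set F : ℝ → ℝ := fun y => ∫ s in Set.Ioi y, g s with hF
    -- F y = ∫_{Ioi x₀} g - ∫ x₀..y g for y ≥ x₀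
    have hsplit : ∀ y : ℝ, x₀ ≤ y →
        F y = (∫ s in Set.Ioi x₀, g s) - ∫ t in x₀..y, g t := by
      intro y hy
      have hunion : Set.Ioc x₀ y ∪ Set.Ioi y = Set.Ioi x₀ := Set.Ioc_union_Ioi_eq_Ioi hy
      have hdisj : Disjoint (Set.Ioc x₀ y) (Set.Ioi y) := by
        exact Set.Ioc_disjoint_Ioi le_rfl
      have h2 : ∫ s in Set.Ioi x₀, g s
          = (∫ s in Set.Ioc x₀ y, g s) + ∫ s in Set.Ioi y, g s := by
        rw [← hunion]
        exact setIntegral_union hdisj measurableSet_Ioi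
          ((hgint x₀ le_rfl).mono_set (hunion ▸ Set.subset_union_left))
          ((hgint x₀ le_rfl).mono_set (hunion ▸ Set.subset_union_right))
      rw [intervalIntegral.integral_of_le hy, h2, hF]
      ring
    have hii : IntervalIntegrable g volume x₀ x := by
      rw [intervalIntegrable_iff, Set.uIoc_of_le hx.le]
      exact (hgint x₀ le_rfl).mono_set Set.Ioc_subset_Ioi_self
    have hmeasAt : StronglyMeasurableAtFilter g (nhds x) volume :=
      hgcont.stronglyMeasurableAtFilter isOpen_Ioi x hx0
    have hcontAt : ContinuousAt g x := hgcont.continuousAt (Ioi_mem_nhds hx0)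
    have hderivInt : HasDerivAt (fun y => ∫ t in x₀..y, g t) (g x) x :=
      intervalIntegral.integral_hasDerivAt_right hii hmeasAt hcontAt
    have hFd : HasDerivAt F (-(g x)) x := by
      have : HasDerivAt (fun y => (∫ s in Set.Ioi x₀, g s) - ∫ t in x₀..y, g t) (-(g x)) x := by
        have h := (hasDerivAt_const x (∫ s in Set.Ioi x₀, g s)).sub hderivInt
        rw [zero_sub] at h
        exact h
      refine this.congr_of_eventuallyEq ?_
      filter_upwards [Ioi_mem_nhds hx] with y hy using hsplit y (le_of_lt hy)
    have hrd : HasDerivAt (fun y => y ^ μ) (μ * x ^ (μ - 1)) x := by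
      simpa [mul_comm] using Real.hasDerivAt_rpow_const (p := μ) (Or.inl hx0.ne')
    have hprod : HasDerivAt (fun y => -(y ^ μ * F y))
        (-(μ * x ^ (μ - 1) * F x + x ^ μ * (-(g x)))) x := (hrd.mul hFd).neg
    have hfinal : HasDerivAt (Smu μ ρ)
        (-(μ * x ^ (μ - 1) * F x + x ^ μ * (-(g x)))) x :=
      hprod.congr_of_eventuallyEq (by
        filter_upwards [Ioi_mem_nhds (lt_of_lt_of_le hx₀ hx.le : (0:ℝ) < x)] with y hy
          using hrep y hy)
    convert hfinal using 1
    have hSx : Smu μ ρ x = -(x ^ μ * F x) := hrep x hx0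
    have e1 : x ^ (μ - 1) = x ^ μ / x := by
      rw [Real.rpow_sub hx0, Real.rpow_one]
    have e2 : x ^ μ * x ^ (-μ - 1) = 1 / x := by
      rw [← Real.rpow_add hx0, show μ + (-μ - 1) = -1 by ring, Real.rpow_neg_one]
      exact (one_div x).symm
    simp only [hSx, hg, e1]
    linear_combination (-(ρ x)) * e2
  · -- the bound
    intro x hx
    have hx0 : 0 < x := lt_of_lt_of_le hx₀ hx
    rw [hrep x hx0, abs_neg, abs_mul, abs_of_nonneg (Real.rpow_nonneg hx0.le μ)]
    have := hFbound x hx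
    calc x * (x ^ μ * |∫ s in Set.Ioi x, g s|)
        ≤ x * (x ^ μ * (M * (x ^ (-μ - 1) / (1 + μ)))) := by
          refine mul_le_mul_of_nonneg_left (mul_le_mul_of_nonneg_left this
            (Real.rpow_nonneg hx0.le μ)) hx0.le
      _ = (x * x ^ μ * x ^ (-μ - 1)) * (M / (1 + μ)) := by ring
      _ = 1 / (1 + μ) * M := by
          rw [show x * x ^ μ * x ^ (-μ-1) = x ^ (1:ℝ) * x ^ μ * x ^ (-μ-1) by
            rw [Real.rpow_one],
            ← Real.rpow_add hx0, ← Real.rpow_add hx0,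
            show (1:ℝ) + μ + (-μ - 1) = 0 by ring, Real.rpow_zero]
          ring
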